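/- For the constant-forcing driven system with δ = 0 and γ_D > (c+e)/2, the coexistence equilibrium with all three coordinates equal to ρ/(γ_D + c + e) is the unique equilibrium in the open positive octant, and it is linearly stable; in particular, the unforced driven unit in the CE-regime admits no other strictly positive equilibria. -/

import Mathlib

/-- The three-species generalized Lotka-Volterra vector field (the δ = 0 driven unit). -/
noncomputable def glv3 (ρ γ c e : ℝ) (s : Fin 3 → ℝ) (i : Fin 3) : ℝ :=
  ρ * s i - γ * (s i) ^ 2 - s i * (c * s (i + 1) + e * s (i + 2))

/-- Jacobian matrix of the vector field at a point. -/
noncomputable def glv3Jac (ρ γ c e : ℝ) (p : Fin 3 → ℝ) :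
    Matrix (Fin 3) (Fin 3) ℝ :=
  fun i j => fderiv ℝ (fun s => glv3 ρ γ c e s i) p (Pi.single j 1)

lemma glv3Jac_apply (ρ γ c e : ℝ) (p : Fin 3 → ℝ) (i j : Fin 3) :
    glv3Jac ρ γ c e p i j =
      (ρ - 2 * γ * p i - (c * p (i+1) + e * p (i+2))) * (if i = j then (1:ℝ) else 0)
        - p i * (c * (if i+1 = j then (1:ℝ) else 0) + e * (if i+2 = j then (1:ℝ) else 0)) := by
  have hi : ∀ k : Fin 3, HasFDerivAt (fun s : Fin 3 → ℝ => s k)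
      (ContinuousLinearMap.proj k : (Fin 3 → ℝ) →L[ℝ] ℝ) p :=
    fun k => hasFDerivAt_apply k p
  have H := ((hi i).const_mul ρ |>.sub (((hi i).mul (hi i)).const_mul γ)).sub
    ((hi i).mul (((hi (i+1)).const_mul c).add ((hi (i+2)).const_mul e)))
  simp only [glv3Jac, glv3, pow_two]
  rw [HasFDerivAt.fderiv (f := fun s : Fin 3 → ℝ => ρ * s i - γ * (s i * s i) - s i * (c * s (i + 1) + e * s (i + 2))) H]
  simp [ContinuousLinearMap.proj_apply, Pi.single_apply, smul_eq_mul]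
  by_cases h1 : i = j <;> by_cases h2 : i+1 = j <;> by_cases h3 : i+2 = j <;>
    simp [h1, h2, h3] <;> ring

set_option maxHeartbeats 1000000 in
theorem coexistence_unique_positive_equilibrium_and_stable (ρ γD c e : ℝ)
    (hρ : 0 < ρ) (hγD : 0 < γD) (hc : 0 < c) (he : 0 < e)
    (hCE : γD > (c + e) / 2) :
    let astar : Fin 3 → ℝ := fun _ => ρ / (γD + c + e)
    (∀ i : Fin 3, glv3 ρ γD c e astar i = 0) ∧
    (∀ s : Fin 3 → ℝ, (∀ i, 0 < s i) → (∀ i, glv3 ρ γD c e s i = 0) → s = astar) ∧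
    (∀ z ∈ spectrum ℂ ((glv3Jac ρ γD c e astar).map Complex.ofReal), z.re < 0) := by
  intro astar
  have hsum : 0 < γD + c + e := by linarith
  set a : ℝ := ρ / (γD + c + e) with ha_def
  have ha : 0 < a := div_pos hρ hsum
  have hρa : ρ = γD * a + c * a + e * a := by
    have h := div_mul_cancel₀ ρ hsum.ne'
    rw [← ha_def] at h; linear_combination -h
  refine ⟨?_, ?_, ?_⟩
  · -- astar is an equilibrium
    intro i
    show ρ * a - γD * a ^ 2 - a * (c * a + e * a) = 0
    rw [hρa]; ring
  · -- uniqueness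
    intro s hs hz
    have key : ∀ i, γD * s i + c * s (i+1) + e * s (i+2) = ρ := by
      intro i
      have h0 := hz i
      simp only [glv3] at h0
      have h : s i * (ρ - (γD * s i + c * s (i+1) + e * s (i+2))) = 0 := by
        linear_combination h0
      rcases mul_eq_zero.mp h with h | h
      · exact absurd h (hs i).ne'
      · linarith
    have h0 := key 0
    have h1 := key 1
    have h2 := key 2
    rw [show ((0:Fin 3)+1) = 1 from rfl, show ((0:Fin 3)+2) = 2 from rfl] at h0
    rw [show ((1:Fin 3)+1) = 2 from rfl, show ((1:Fin 3)+2) = 0 from rfl] at h1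
    rw [show ((2:Fin 3)+1) = 0 from rfl, show ((2:Fin 3)+2) = 1 from rfl] at h2
    have hsq : (γD - (c+e)/2) *
        ((s 0 - s 1)^2 + (s 1 - s 2)^2 + (s 2 - s 0)^2) = 0 := by
      linear_combination (s 0 - s 1) * h0 - (s 0 - s 1) * h1 + (s 1 - s 2) * h1
        - (s 1 - s 2) * h2 + (s 2 - s 0) * h2 - (s 2 - s 0) * h0
    have hpos : 0 < γD - (c+e)/2 := by linarith
    have hd : (s 0 - s 1)^2 + (s 1 - s 2)^2 + (s 2 - s 0)^2 = 0 := by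
      rcases mul_eq_zero.mp hsq with h | h
      · exact absurd h hpos.ne'
      · exact h
    have h01 : s 0 = s 1 := by
      nlinarith [sq_nonneg (s 0 - s 1), sq_nonneg (s 1 - s 2), sq_nonneg (s 2 - s 0)]
    have h12 : s 1 = s 2 := by
      nlinarith [sq_nonneg (s 0 - s 1), sq_nonneg (s 1 - s 2), sq_nonneg (s 2 - s 0)]
    have hval : s 0 = a := by
      rw [ha_def, eq_div_iff hsum.ne']
      linear_combination h0 + c * h01 + e * h01 + e * h12
    funext i
    fin_cases i
    · exact hval
    · show s 1 = a; rw [← h01]; exact hval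
    · show s 2 = a; rw [← h12, ← h01]; exact hval
  · -- stability
    intro z hz
    have hJ : ∀ i j, glv3Jac ρ γD c e astar i j =
        (if i = j then -(γD*a) else 0) + (if i+1 = j then -(c*a) else 0)
          + (if i+2 = j then -(e*a) else 0) := by
      intro i j
      rw [glv3Jac_apply]
      show (ρ - 2 * γD * a - (c * a + e * a)) * (if i = j then (1:ℝ) else 0)
        - a * (c * (if i+1 = j then (1:ℝ) else 0) + e * (if i+2 = j then (1:ℝ) else 0)) = _
      by_cases hij : i = j <;> by_cases h2 : i+1 = j <;> by_cases h3 : i+2 = j <;>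
        simp [hij, h2, h3, hρa] <;> ring
    set G : ℝ := γD * a with hG_def
    set B : ℝ := c * a with hB_def
    set D : ℝ := e * a with hD_def
    set M : Matrix (Fin 3) (Fin 3) ℂ := (glv3Jac ρ γD c e astar).map Complex.ofReal with hM
    have hM3 : algebraMap ℂ (Matrix (Fin 3) (Fin 3) ℂ) z - M =
        !![z + G, (B:ℂ), (D:ℂ); (D:ℂ), z + G, (B:ℂ); (B:ℂ), (D:ℂ), z + G] := by
      ext i j
      fin_cases i <;> fin_cases j <;>
        · simp only [Matrix.sub_apply, Matrix.algebraMap_matrix_apply, hM,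
            Matrix.map_apply, hJ]
          norm_num
          try tauto
          try push_cast
          try ring
    rw [spectrum.mem_iff] at hz
    have hdet : (algebraMap ℂ (Matrix (Fin 3) (Fin 3) ℂ) z - M).det = 0 := by
      by_contra h
      exact hz ((Matrix.isUnit_iff_isUnit_det _).mpr (isUnit_iff_ne_zero.mpr h))
    rw [hM3, Matrix.det_fin_three] at hdet
    simp at hdet
    have hfac : (z + G + B + D) *
        ((z + G) * (z + G) + (B:ℂ) * B + (D:ℂ) * D - (z + G) * B - (z + G) * D
          - (B:ℂ) * D) = 0 := by
      linear_combination hdet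
    have hG : 0 < G := mul_pos hγD ha
    have hB : 0 < B := mul_pos hc ha
    have hD : 0 < D := mul_pos he ha
    have hGBD : B + D < 2 * G := by
      rw [hG_def, hB_def, hD_def]
      nlinarith [mul_lt_mul_of_pos_right hCE ha]
    rcases mul_eq_zero.mp hfac with h | h
    · have hre := congrArg Complex.re h
      simp [Complex.add_re, Complex.ofReal_re] at hre
      linarith
    · have hre := congrArg Complex.re h
      have him := congrArg Complex.im h
      simp [Complex.add_re, Complex.add_im, Complex.mul_re, Complex.mul_im,
        Complex.sub_re, Complex.sub_im, Complex.ofReal_re, Complex.ofReal_im] at hre him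
      -- him gives z.im * (2*(z.re+G) - B - D) = 0
      have hv : z.im * (2 * (z.re + G) - B - D) = 0 := by linear_combination him
      rcases mul_eq_zero.mp hv with hv0 | hv0
      · rw [hv0] at hre
        nlinarith [sq_nonneg (z.re + G - (B + D)/2), sq_nonneg (B - D)]
      · linarith
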